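/- arXiv:1605.02062 — 2 statements merged into one kernel-verified Lean document; each statement's English description precedes it below -/
import Mathlib

section
/- Fix an integer K ≥ 0. For every family (τ_α)_{α∈(0,1)} of detection rules in the change-point model satisfying P(τ_α < Γ) ≤ α for all α ∈ (0,1), the probability that the rule stops only after a delay exceeding K (or never stops) tends to one as the false-alarm level goes to zero: lim_{α→0⁺} P(τ_α > Γ + K) = 1, where the event {τ_α > Γ + K} includes the event {τ_α = ∞}. (This makes precise the claim of Theorems 1 and 2 that, with high probability, the attacker detects the change only after a constant delay.) -/
open MeasureTheory ProbabilityTheory Filter Set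

noncomputable section

/-- The change-point probability measure `P = Σ_{k≥1} (1−ρ)^{k−1} ρ · (δ_k ⊗ ν_k)` on
`ℕ × (ℕ → ℝ)`.  The first coordinate is the change point `Γ` (geometric with parameter `ρ`),
the second coordinate is the observation sequence `(x₁, x₂, …)`, encoded as a function
`ℕ → ℝ` whose `i`-th value (0-based) is the observation `X_{i+1}`. -/
def changePointMeasure (ρ : ℝ) (ν : ℕ → Measure (ℕ → ℝ)) : Measure (ℕ × (ℕ → ℝ)) :=
  Measure.sum fun k : ℕ =>
    (ENNReal.ofReal ((1 - ρ) ^ k * ρ)) • ((Measure.dirac (k + 1)).prod (ν (k + 1)))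

/-- `ν k` is the countable product probability measure on sequences `(x₁, x₂, …) ∈ ℝ^ℕ`
whose `i`-th factor (1-based) is `N(0,σ²)` for `i < k` and `N(A,σ²)` for `i ≥ k`:
each `ν k` is a probability measure whose finite-dimensional marginals are the
corresponding finite Gaussian product measures.  (With 0-based coordinates, the factor of
coordinate `i`, i.e. of observation `X_{i+1}`, is `N(0,σ²)` iff `i + 1 < k`.) -/
def IsChangePointFamily (σ A : ℝ) (ν : ℕ → Measure (ℕ → ℝ)) : Prop :=
  (∀ k, IsProbabilityMeasure (ν k)) ∧
    ∀ k n : ℕ,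
      (ν k).map (fun x (i : Fin n) => x i) =
        Measure.pi fun i : Fin n =>
          if (i : ℕ) + 1 < k then gaussianReal 0 ⟨σ ^ 2, sq_nonneg σ⟩
          else gaussianReal A ⟨σ ^ 2, sq_nonneg σ⟩

/-- A detection rule: a (possibly infinite valued) stopping time `τ` on observation
sequences such that for every `n ≥ 1` the event `{τ = n}` is measurable with respect to
the σ-algebra generated by the first `n` observations `X₁, …, X_n`. -/
def IsDetectionRule (τ : (ℕ → ℝ) → ℕ∞) : Prop :=
  ∀ n : ℕ, 1 ≤ n →
    MeasurableSet[MeasurableSpace.comap (fun x : ℕ → ℝ => fun i : Fin n => x i) inferInstance]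
      {x | τ x = (n : ℕ∞)}

section AuxLemmas

open Real
open scoped ENNReal NNReal

def myGE (σ A : ℝ) : ℝ → ℝ≥0∞ := fun t => ENNReal.ofReal (rexp (A / σ ^ 2 * t - A ^ 2 / (2 * σ ^ 2)))

lemma myGE_meas (σ A : ℝ) : Measurable (myGE σ A) := by unfold myGE; fun_prop


lemma my_le_add_sq_div (a b : ℝ≥0∞) (hb : b ≠ 0) : a ≤ b + a ^ 2 / b := by
  rcases le_or_gt a b with h | h
  · exact h.trans le_self_add
  · refine le_add_self.trans' ?_
    rw [ENNReal.le_div_iff_mul_le (Or.inl hb) (Or.inl h.ne_top)]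
    calc a * b ≤ a * a := mul_le_mul_right h.le a
    _ = a ^ 2 := (sq a).symm


lemma my_lintegral_pi_prod : ∀ {n : ℕ} (μ : Fin n → Measure ℝ), (∀ i, SigmaFinite (μ i)) →
    ∀ (f : Fin n → ℝ → ℝ≥0∞), (∀ i, Measurable (f i)) →
    ∫⁻ x, ∏ i, f i (x i) ∂(Measure.pi μ) = ∏ i, ∫⁻ t, f i t ∂(μ i) := by
  intro n
  induction n with
  | zero =>
    intro μ _ f _
    simp [Measure.pi_of_empty]
  | succ n ih =>
    intro μ hsf f hf
    haveI := hsf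
    have hmp := measurePreserving_piFinSuccAbove μ 0
    have key : ∫⁻ x, ∏ i, f i (x i) ∂(Measure.pi μ)
        = ∫⁻ y, f 0 y.1 * ∏ i : Fin n, f (Fin.succAbove 0 i) (y.2 i)
            ∂((μ 0).prod (Measure.pi fun j => μ (Fin.succAbove 0 j))) := by
      rw [← hmp.lintegral_comp]
      · congr 1
        funext x
        rw [Fin.prod_univ_succ]
        simp only [MeasurableEquiv.piFinSuccAbove_apply]
        congr 1
      · exact (hf 0).comp measurable_fst |>.mul <| Finset.measurable_prod _ fun i _ =>
          (hf _).comp ((measurable_pi_apply i).comp measurable_snd)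
    rw [key]
    have h2 : ∫⁻ y, f 0 y.1 * ∏ i : Fin n, f (Fin.succAbove 0 i) (y.2 i)
            ∂((μ 0).prod (Measure.pi fun j => μ (Fin.succAbove 0 j)))
        = (∫⁻ t, f 0 t ∂(μ 0)) * ∫⁻ y, ∏ i : Fin n, f (Fin.succAbove 0 i) (y i)
            ∂(Measure.pi fun j => μ (Fin.succAbove 0 j)) :=
      lintegral_prod_mul ((hf 0).aemeasurable)
        ((Finset.measurable_prod _ fun i _ => (hf _).comp (measurable_pi_apply i)).aemeasurable)
    rw [h2, ih _ (fun i => inferInstance) _ (fun i => hf _), Fin.prod_univ_succ]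
    rfl


lemma my_gauss_shift (σ A : ℝ) (hσ : 0 < σ) :
    gaussianReal A ⟨σ ^ 2, sq_nonneg σ⟩ =
      (gaussianReal 0 ⟨σ ^ 2, sq_nonneg σ⟩).withDensity
        (myGE σ A) := by
  have hσ2 : (0:ℝ) < σ ^ 2 := by positivity
  have hV : (⟨σ ^ 2, sq_nonneg σ⟩ : ℝ≥0) ≠ 0 := by
    simp [← NNReal.coe_ne_zero]; positivity
  unfold myGE
  rw [gaussianReal_of_var_ne_zero _ hV, gaussianReal_of_var_ne_zero _ hV,
    ← withDensity_mul (f := gaussianPDF 0 (⟨σ ^ 2, sq_nonneg σ⟩ : ℝ≥0)) _ (measurable_gaussianPDF _ _) (by fun_prop)]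
  congr 1
  funext t
  simp only [Pi.mul_apply, gaussianPDF, ← ENNReal.ofReal_mul (gaussianPDFReal_nonneg 0 (⟨σ ^ 2, sq_nonneg σ⟩ : ℝ≥0) t)]
  congr 1
  simp only [gaussianPDFReal]; erw [NNReal.coe_mk]
  have E1 : -(t - A) ^ 2 / (2 * σ ^ 2)
      = -(t - 0) ^ 2 / (2 * σ ^ 2) + (A / σ ^ 2 * t - A ^ 2 / (2 * σ ^ 2)) := by
    field_simp; ring
  rw [E1, Real.exp_add]; ring


lemma my_lintegral_exp_gauss (σ : ℝ) (hσ : 0 < σ) (s d : ℝ) :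
    ∫⁻ t, ENNReal.ofReal (rexp (s * t + d)) ∂(gaussianReal 0 ⟨σ ^ 2, sq_nonneg σ⟩)
      = ENNReal.ofReal (rexp (s ^ 2 * σ ^ 2 / 2 + d)) := by
  have hσ2 : (0:ℝ) < σ ^ 2 := by positivity
  have hV : (⟨σ ^ 2, sq_nonneg σ⟩ : ℝ≥0) ≠ 0 := by
    simp [← NNReal.coe_ne_zero]; positivity
  rw [gaussianReal_of_var_ne_zero _ hV,
    lintegral_withDensity_eq_lintegral_mul _ (measurable_gaussianPDF 0 (⟨σ ^ 2, sq_nonneg σ⟩ : ℝ≥0)) (by fun_prop)]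
  have hpt : ∀ t : ℝ, (gaussianPDF 0 ⟨σ ^ 2, sq_nonneg σ⟩ * fun t => ENNReal.ofReal (rexp (s * t + d))) t
      = ENNReal.ofReal (rexp (s ^ 2 * σ ^ 2 / 2 + d)) * gaussianPDF (s * σ ^ 2) ⟨σ ^ 2, sq_nonneg σ⟩ t := by
    intro t
    simp only [Pi.mul_apply, gaussianPDF, ← ENNReal.ofReal_mul (gaussianPDFReal_nonneg 0 (⟨σ ^ 2, sq_nonneg σ⟩ : ℝ≥0) t)]
    rw [← ENNReal.ofReal_mul (by positivity)]
    congr 1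
    simp only [gaussianPDFReal]; erw [NNReal.coe_mk]
    have E1 : -(t - 0) ^ 2 / (2 * σ ^ 2) + (s * t + d)
        = (s ^ 2 * σ ^ 2 / 2 + d) + -(t - s * σ ^ 2) ^ 2 / (2 * σ ^ 2) := by
      field_simp; ring
    rw [mul_assoc, ← Real.exp_add, E1, Real.exp_add]; ring
  simp_rw [hpt]
  rw [lintegral_const_mul _ (measurable_gaussianPDF (s * σ ^ 2) (⟨σ ^ 2, sq_nonneg σ⟩ : ℝ≥0)), lintegral_gaussianPDF_eq_one _ hV, mul_one]


lemma my_lintegral_sq_gauss (σ A : ℝ) (hσ : 0 < σ) :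
    ∫⁻ t, (myGE σ A t) ^ 2 ∂(gaussianReal 0 ⟨σ ^ 2, sq_nonneg σ⟩)
      = ENNReal.ofReal (rexp (A ^ 2 / σ ^ 2)) := by
  have hσ2 : (0:ℝ) < σ ^ 2 := by positivity
  have h1 : ∀ t : ℝ, (myGE σ A t) ^ 2
      = ENNReal.ofReal (rexp ((2 * A / σ ^ 2) * t + (- (A ^ 2 / σ ^ 2)))) := by
    intro t
    rw [myGE, ← ENNReal.ofReal_pow (exp_nonneg _), ← Real.exp_nat_mul]
    congr 1
    push_cast
    field_simp
    ring
  simp_rw [h1, my_lintegral_exp_gauss σ hσ]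
  congr 1
  field_simp
  ring

lemma my_core (σ A : ℝ) (hσ : 0 < σ) (j K : ℕ) (hj : 1 ≤ j)
    {E : Set (Fin (j + K) → ℝ)} (hE : MeasurableSet E) {M : ℝ≥0∞} (hM0 : M ≠ 0) (hMt : M ≠ ∞) :
    Measure.pi (fun i : Fin (j + K) =>
        if (i : ℕ) + 1 < j then gaussianReal 0 ⟨σ ^ 2, sq_nonneg σ⟩
        else gaussianReal A ⟨σ ^ 2, sq_nonneg σ⟩) E
      ≤ M * Measure.pi (fun _ : Fin (j + K) => gaussianReal 0 ⟨σ ^ 2, sq_nonneg σ⟩) E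
        + ENNReal.ofReal (rexp ((K + 1) * (A ^ 2 / σ ^ 2))) / M := by
  set γ0 := gaussianReal 0 ⟨σ ^ 2, sq_nonneg σ⟩ with hγ0
  set γA := gaussianReal A ⟨σ ^ 2, sq_nonneg σ⟩ with hγA
  set D : Fin (j + K) → ℝ → ℝ≥0∞ :=
    fun i => if (i : ℕ) + 1 < j then (fun _ => 1) else myGE σ A with hD
  have hDm : ∀ i, Measurable (D i) := by
    intro i
    rw [hD]
    dsimp only
    split
    · exact measurable_const
    · exact myGE_meas σ A
  set L : (Fin (j + K) → ℝ) → ℝ≥0∞ := fun x => ∏ i, D i (x i) with hL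
  have hLm : Measurable L := Finset.measurable_prod _ fun i _ => (hDm i).comp (measurable_pi_apply i)
  have hcoord : ∀ i : Fin (j + K),
      (if (i : ℕ) + 1 < j then γ0 else γA) = γ0.withDensity (D i) := by
    intro i
    rw [hD]
    dsimp only
    split
    · exact (withDensity_one (μ := γ0)).symm
    · exact my_gauss_shift σ A hσ
  -- the measure identity
  have hpi : Measure.pi (fun i : Fin (j + K) => if (i : ℕ) + 1 < j then γ0 else γA)
      = (Measure.pi fun _ : Fin (j + K) => γ0).withDensity L := by
    haveI hP : ∀ i : Fin (j + K), IsProbabilityMeasure (if (i : ℕ) + 1 < j then γ0 else γA) := by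
      intro i; split
      · exact instIsProbabilityMeasureGaussianReal 0 _
      · exact instIsProbabilityMeasureGaussianReal A _
    refine Measure.pi_eq fun s hs => ?_
    rw [withDensity_apply _ (MeasurableSet.univ_pi hs), ← lintegral_indicator (MeasurableSet.univ_pi hs)]
    have hind : (fun x => (Set.pi Set.univ s).indicator L x)
        = fun x => ∏ i, ((s i).indicator (D i)) (x i) := by
      funext x
      by_cases hx : x ∈ Set.pi Set.univ s
      · rw [Set.indicator_of_mem hx]
        exact Finset.prod_congr rfl fun i _ =>
          (Set.indicator_of_mem (hx i (Set.mem_univ i)) _).symm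
      · rw [Set.indicator_of_notMem hx]
        rw [Set.mem_univ_pi] at hx
        push_neg at hx
        obtain ⟨i0, hi0⟩ := hx
        exact (Finset.prod_eq_zero (Finset.mem_univ i0) (Set.indicator_of_notMem hi0 _)).symm
    rw [hind, my_lintegral_pi_prod (fun _ => γ0) (fun i => @IsFiniteMeasure.toSigmaFinite _ _ _ ⟨lt_of_eq_of_lt (instIsProbabilityMeasureGaussianReal 0 _).measure_univ ENNReal.one_lt_top⟩) _
      (fun i => (hDm i).indicator (hs i))]
    refine Finset.prod_congr rfl fun i _ => ?_
    rw [hcoord i, withDensity_apply _ (hs i), ← lintegral_indicator (hs i)]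
  rw [hpi, withDensity_apply _ hE]
  -- truncation bound
  have hstep : ∫⁻ x in E, L x ∂(Measure.pi fun _ : Fin (j + K) => γ0)
      ≤ M * Measure.pi (fun _ : Fin (j + K) => γ0) E
        + (∫⁻ x, (L x) ^ 2 ∂(Measure.pi fun _ : Fin (j + K) => γ0)) / M := by
    calc ∫⁻ x in E, L x ∂(Measure.pi fun _ : Fin (j + K) => γ0)
        ≤ ∫⁻ x in E, (M + (L x) ^ 2 / M) ∂(Measure.pi fun _ : Fin (j + K) => γ0) :=
          lintegral_mono fun x => my_le_add_sq_div _ _ hM0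
      _ = M * Measure.pi (fun _ : Fin (j + K) => γ0) E
          + ∫⁻ x in E, (L x) ^ 2 / M ∂(Measure.pi fun _ : Fin (j + K) => γ0) := by
          rw [lintegral_add_left measurable_const, setLIntegral_const]
      _ ≤ M * Measure.pi (fun _ : Fin (j + K) => γ0) E
          + (∫⁻ x, (L x) ^ 2 ∂(Measure.pi fun _ : Fin (j + K) => γ0)) / M := by
          gcongr
          calc ∫⁻ x in E, (L x) ^ 2 / M ∂(Measure.pi fun _ : Fin (j + K) => γ0)
              ≤ ∫⁻ x, (L x) ^ 2 / M ∂(Measure.pi fun _ : Fin (j + K) => γ0) :=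
                lintegral_mono' Measure.restrict_le_self le_rfl
            _ = (∫⁻ x, (L x) ^ 2 ∂(Measure.pi fun _ : Fin (j + K) => γ0)) / M := by
                simp_rw [div_eq_mul_inv]
                exact lintegral_mul_const' _ _ (ENNReal.inv_ne_top.2 hM0)
  refine hstep.trans ?_
  gcongr
  -- compute the second moment
  have hsq : ∫⁻ x, (L x) ^ 2 ∂(Measure.pi fun _ : Fin (j + K) => γ0)
      = ∏ i : Fin (j + K), ∫⁻ t, (D i t) ^ 2 ∂γ0 := by
    have : ∀ x : Fin (j + K) → ℝ, (L x) ^ 2 = ∏ i, (D i (x i)) ^ 2 := by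
      intro x; rw [hL]; exact (Finset.prod_pow _ _ _).symm
    simp_rw [this]
    exact my_lintegral_pi_prod _ (fun i => @IsFiniteMeasure.toSigmaFinite _ _ _ ⟨lt_of_eq_of_lt (instIsProbabilityMeasureGaussianReal 0 _).measure_univ ENNReal.one_lt_top⟩) _ fun i => (hDm i).pow_const 2
  rw [hsq]
  have hfac : ∀ i : Fin (j + K), ∫⁻ t, (D i t) ^ 2 ∂γ0
      = if (i : ℕ) + 1 < j then 1 else ENNReal.ofReal (rexp (A ^ 2 / σ ^ 2)) := by
    intro i
    rw [hD]
    dsimp only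
    split
    · simp; exact (instIsProbabilityMeasureGaussianReal 0 _).measure_univ
    · exact my_lintegral_sq_gauss σ A hσ
  simp_rw [hfac]
  rw [Finset.prod_ite, Finset.prod_const_one, one_mul, Finset.prod_const]
  -- cardinality
  obtain ⟨a, rfl⟩ : ∃ a, j = a + 1 := ⟨j - 1, (Nat.succ_pred_eq_of_pos hj).symm⟩
  have hcard : (Finset.univ.filter fun i : Fin (a + 1 + K) => ¬((i : ℕ) + 1 < a + 1)).card
      = K + 1 := by
    have hset : (Finset.univ.filter fun i : Fin (a + 1 + K) => ¬((i : ℕ) + 1 < a + 1))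
        = Finset.Ici (⟨a, by omega⟩ : Fin (a + 1 + K)) := by
      ext i
      simp only [Finset.mem_filter, Finset.mem_Ici, Fin.le_def, Finset.mem_univ, true_and,
        Fin.val_mk, not_lt]
      omega
    rw [hset, Fin.card_Ici]
    simp only [Fin.val_mk]
    omega
  rw [hcard, ← ENNReal.ofReal_pow (exp_nonneg _), ← Real.exp_nat_mul]
  push_cast
  exact le_rfl


end AuxLemmas

open Real
open scoped ENNReal NNReal

/-- for any family of detection rules with false-alarm probability at most `α`,
the probability that the rule stops only after a delay exceeding `K` (or never stops, i.e.
`τ_α = ∞`) tends to one as the false-alarm level `α` tends to zero: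
`lim_{α→0⁺} P(τ_α > Γ + K) = 1`. -/
theorem detection_delay_exceeds_K_prob_tendsto_one
    (σ A ρ : ℝ) (hσ : 0 < σ) (hA : 0 < A) (hρ : ρ ∈ Set.Ioo (0 : ℝ) 1)
    (ν : ℕ → Measure (ℕ → ℝ)) (hν : IsChangePointFamily σ A ν)
    (K : ℕ)
    (τ : ℝ → (ℕ → ℝ) → ℕ∞)
    (hτ : ∀ α ∈ Set.Ioo (0 : ℝ) 1, IsDetectionRule (τ α))
    (hFA : ∀ α ∈ Set.Ioo (0 : ℝ) 1,
      changePointMeasure ρ ν {ω | τ α ω.2 < (ω.1 : ℕ∞)} ≤ ENNReal.ofReal α) :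
    Filter.Tendsto
      (fun α : ℝ =>
        changePointMeasure ρ ν {ω | ((ω.1 + K : ℕ) : ℕ∞) < τ α ω.2})
      (nhdsWithin 0 (Set.Ioo (0 : ℝ) 1)) (nhds 1) := by
  obtain ⟨hρ0, hρ1⟩ := hρ
  have h1ρ : (0:ℝ) < 1 - ρ := by linarith
  have h1ρ' : (1:ℝ) - ρ < 1 := by linarith
  obtain ⟨hprob, hmap⟩ := hν
  set P : Measure (ℕ × (ℕ → ℝ)) := changePointMeasure ρ ν with hP
  set w : ℕ → ℝ≥0∞ := fun k => ENNReal.ofReal ((1 - ρ) ^ k * ρ) with hw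
  set r : ℝ := Real.sqrt (1 - ρ) with hr
  have hr0 : 0 < r := Real.sqrt_pos.2 h1ρ
  have hr1 : r < 1 := by
    nlinarith [Real.sq_sqrt h1ρ.le, Real.sqrt_nonneg (1 - ρ), hr]
  have hr2 : 1 - ρ = r ^ 2 := (Real.sq_sqrt h1ρ.le).symm
  set c₂ : ℝ := rexp ((K + 1) * (A ^ 2 / σ ^ 2)) with hc₂
  have hc₂0 : 0 < c₂ := exp_pos _
  set C₃ : ℝ := (((1 - ρ) ^ (K + 1))⁻¹ + ρ * c₂) * (1 - r)⁻¹ with hC₃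
  have hC₃0 : 0 < C₃ := by
    apply mul_pos
    · positivity
    · rw [inv_pos]; linarith
  -- P of a rectangle {k+1} ×ˢ E
  have hL3 : ∀ (k : ℕ) (E : Set (ℕ → ℝ)), MeasurableSet E →
      P (({k + 1} : Set ℕ) ×ˢ E) = w k * ν (k + 1) E := by
    intro k E hE
    haveI := hprob
    rw [hP, changePointMeasure, Measure.sum_apply _ ((measurableSet_singleton _).prod hE)]
    rw [tsum_eq_single k ?_]
    · rw [Measure.smul_apply, smul_eq_mul, Measure.prod_prod,
        Measure.dirac_apply_of_mem (mem_singleton _), one_mul]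
    · intro i hi
      rw [Measure.smul_apply, smul_eq_mul, Measure.prod_prod, Measure.dirac_apply' _
        (measurableSet_singleton _)]
      rw [Set.indicator_of_notMem (by simp [hi])]
      simp
  -- P is a probability measure
  have hPuniv : P univ = 1 := by
    haveI := hprob
    rw [hP, changePointMeasure, Measure.sum_apply _ MeasurableSet.univ]
    have : ∀ k : ℕ, ((ENNReal.ofReal ((1 - ρ) ^ k * ρ)) •
        ((Measure.dirac (k + 1)).prod (ν (k + 1)))) univ = ENNReal.ofReal ((1 - ρ) ^ k * ρ) := by
      intro k
      rw [Measure.smul_apply, smul_eq_mul, ← Set.univ_prod_univ, Measure.prod_prod]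
      simp
    simp_rw [this]
    rw [← ENNReal.ofReal_tsum_of_nonneg (fun k => by positivity)
      ((summable_geometric_of_lt_one h1ρ.le h1ρ').mul_right ρ)]
    rw [tsum_mul_right, tsum_geometric_of_lt_one h1ρ.le h1ρ']
    rw [show (1:ℝ) - (1 - ρ) = ρ by ring]
    rw [inv_mul_cancel₀ hρ0.ne']
    simp
  have hPsum : ∀ (S : Set (ℕ × (ℕ → ℝ))), MeasurableSet S →
      P S = ∑' k, (ENNReal.ofReal ((1 - ρ) ^ k * ρ)) •
        ((Measure.dirac (k + 1)).prod (ν (k + 1))) S := by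
    intro S hS
    haveI := hprob
    rw [hP, changePointMeasure, Measure.sum_apply _ hS]
    exact tsum_congr fun k => Measure.smul_apply _ _ _
  set c₂ : ℝ := rexp ((K + 1) * (A ^ 2 / σ ^ 2)) with hc₂
  have hc₂0 : 0 < c₂ := exp_pos _
  set C₃ : ℝ := (((1 - ρ) ^ (K + 1))⁻¹ + ρ * c₂) * (1 - r)⁻¹ with hC₃
  have hC₃0 : 0 < C₃ := by
    apply mul_pos
    · positivity
    · rw [inv_pos]; linarith
  have key : ∀ α ∈ Set.Ioo (0:ℝ) 1,
      (1 : ℝ≥0∞) - ENNReal.ofReal (α + Real.sqrt α * C₃)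
        ≤ P {ω : ℕ × (ℕ → ℝ) | ((ω.1 + K : ℕ) : ℕ∞) < τ α ω.2} := by
    intro α hα
    have hFA' : P {ω : ℕ × (ℕ → ℝ) | τ α ω.2 < (ω.1 : ℕ∞)} ≤ ENNReal.ofReal α := hFA α hα
    have hDet : ∀ n : ℕ, 1 ≤ n →
        MeasurableSet[MeasurableSpace.comap
          (fun x : ℕ → ℝ => fun i : Fin n => x i) inferInstance]
        {x | τ α x = (n : ℕ∞)} := hτ α hα
    set t : (ℕ → ℝ) → ℕ∞ := τ α with ht
    classical
    haveI := hprob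
    have h1ρ : (0:ℝ) < 1 - ρ := by linarith
    set sa : ℝ := Real.sqrt α with hsa
    have hsa0 : 0 < sa := Real.sqrt_pos.2 hα.1
    have hsa2 : α = sa ^ 2 := (Real.sq_sqrt hα.1.le).symm
    -- choose representing sets for the events {t = n}
    have H : ∀ n : ℕ, ∃ s' : Set (Fin n → ℝ), MeasurableSet s' ∧
        ((fun (x : ℕ → ℝ) (i : Fin n) => x i) ⁻¹' s'
          = if 1 ≤ n then {x | t x = (n : ℕ∞)} else ∅) := by
      intro n
      by_cases hn : 1 ≤ n
      · obtain ⟨s', hs', hpre⟩ := MeasurableSpace.measurableSet_comap.mp (hDet n hn)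
        exact ⟨s', hs', by rw [if_pos hn, hpre]⟩
      · exact ⟨∅, MeasurableSet.empty, by rw [if_neg hn]; simp⟩
    choose s' hs'meas hs'pre using H
    -- the "detected within K of the change" events
    set EE : ℕ → Set (ℕ → ℝ) :=
      fun j => {x | (j : ℕ∞) ≤ t x ∧ t x ≤ ((j + K : ℕ) : ℕ∞)} with hEE
    set SS : (j : ℕ) → Set (Fin (j + K) → ℝ) :=
      fun j => ⋃ (n : ℕ) (hn : n ∈ Finset.Icc j (j + K)),
        (fun (y : Fin (j + K) → ℝ) (i : Fin n) => y (Fin.castLE (Finset.mem_Icc.mp hn).2 i))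
          ⁻¹' (s' n) with hSS
    have hSSmeas : ∀ j, MeasurableSet (SS j) := by
      intro j
      refine MeasurableSet.iUnion fun n => MeasurableSet.iUnion fun hn => ?_
      exact (measurable_pi_lambda _ fun i => measurable_pi_apply _) (hs'meas n)
    have hpre : ∀ j : ℕ, 1 ≤ j →
        (fun (x : ℕ → ℝ) (i : Fin (j + K)) => x i) ⁻¹' (SS j) = EE j := by
      intro j hj
      rw [hSS]
      simp only [Set.preimage_iUnion]
      have heach : ∀ (n : ℕ) (hn : n ∈ Finset.Icc j (j + K)),
          (fun (x : ℕ → ℝ) (i : Fin (j + K)) => x i) ⁻¹'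
            ((fun (y : Fin (j + K) → ℝ) (i : Fin n) => y (Fin.castLE (Finset.mem_Icc.mp hn).2 i))
              ⁻¹' (s' n)) = {x | t x = (n : ℕ∞)} := by
        intro n hn
        rw [← Set.preimage_comp]
        have hcomp : ((fun (y : Fin (j + K) → ℝ) (i : Fin n) =>
            y (Fin.castLE (Finset.mem_Icc.mp hn).2 i)) ∘ (fun (x : ℕ → ℝ) (i : Fin (j + K)) => x i))
            = fun (x : ℕ → ℝ) (i : Fin n) => x i := by
          funext x
          funext i
          simp [Fin.coe_castLE]
        rw [hcomp, hs'pre n, if_pos (le_trans hj (Finset.mem_Icc.mp hn).1)]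
      ext x
      simp only [Set.mem_iUnion, Set.mem_setOf_eq, hEE]
      constructor
      · rintro ⟨n, hn, hx⟩
        rw [heach n hn] at hx
        simp only [Set.mem_setOf_eq] at hx
        obtain ⟨h1, h2⟩ := Finset.mem_Icc.mp hn
        constructor
        · rw [hx]; exact Nat.cast_le.mpr h1
        · rw [hx]; exact Nat.cast_le.mpr h2
      · rintro ⟨h1, h2⟩
        have hne : t x ≠ ⊤ :=
          ne_top_of_le_ne_top (ENat.coe_ne_top (j + K)) h2
        obtain ⟨n, hn⟩ := WithTop.ne_top_iff_exists.mp hne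
        have hmem : n ∈ Finset.Icc j (j + K) := by
          rw [← hn] at h1 h2
          exact Finset.mem_Icc.mpr ⟨Nat.cast_le.mp h1, Nat.cast_le.mp h2⟩
        refine ⟨n, hmem, ?_⟩
        rw [heach n hmem]
        exact hn.symm
    have hEEmeas : ∀ j : ℕ, 1 ≤ j → MeasurableSet (EE j) := by
      intro j hj
      rw [← hpre j hj]
      exact (measurable_pi_lambda _ fun i => measurable_pi_apply _) (hSSmeas j)
    have hfm : ∀ j : ℕ, Measurable (fun (x : ℕ → ℝ) (i : Fin (j + K)) => x i) :=
      fun j => measurable_pi_lambda _ fun i => measurable_pi_apply _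
    -- identification with finite-dimensional Gaussian measures
    have hEEj : ∀ j : ℕ, 1 ≤ j → ν j (EE j) =
        Measure.pi (fun i : Fin (j + K) =>
          if (i : ℕ) + 1 < j then gaussianReal 0 ⟨σ ^ 2, sq_nonneg σ⟩
          else gaussianReal A ⟨σ ^ 2, sq_nonneg σ⟩) (SS j) := by
      intro j hj
      rw [← hpre j hj, ← Measure.map_apply (hfm j) (hSSmeas j), hmap j (j + K)]
    have hEE0 : ∀ j : ℕ, 1 ≤ j → ν (j + K + 1) (EE j) =
        Measure.pi (fun _ : Fin (j + K) => gaussianReal 0 ⟨σ ^ 2, sq_nonneg σ⟩) (SS j) := by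
      intro j hj
      have hfam : (fun i : Fin (j + K) =>
          if (i : ℕ) + 1 < j + K + 1 then gaussianReal 0 ⟨σ ^ 2, sq_nonneg σ⟩
          else gaussianReal A ⟨σ ^ 2, sq_nonneg σ⟩)
          = fun _ : Fin (j + K) => gaussianReal 0 ⟨σ ^ 2, sq_nonneg σ⟩ :=
        funext fun i => if_pos (by omega)
      rw [← hpre j hj, ← Measure.map_apply (hfm j) (hSSmeas j), hmap (j + K + 1) (j + K), hfam]
    -- false-alarm control at time j+K+1
    have hFAj : ∀ j : ℕ, 1 ≤ j →
        w (j + K) * ν (j + K + 1) (EE j) ≤ ENNReal.ofReal α := by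
      intro j hj
      have hsub : ({j + K + 1} : Set ℕ) ×ˢ EE j ⊆ {ω : ℕ × (ℕ → ℝ) | t ω.2 < (ω.1 : ℕ∞)} := by
        rintro ⟨p, x⟩ ⟨hp, hx⟩
        simp only [Set.mem_singleton_iff] at hp
        simp only [Set.mem_setOf_eq]
        subst hp
        refine lt_of_le_of_lt hx.2 ?_
        exact_mod_cast Nat.lt_succ_self (j + K)
      calc w (j + K) * ν (j + K + 1) (EE j) = P (({j + K + 1} : Set ℕ) ×ˢ EE j) :=
            (hL3 (j + K) (EE j) (hEEmeas j hj)).symm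
        _ ≤ P {ω : ℕ × (ℕ → ℝ) | t ω.2 < (ω.1 : ℕ∞)} := measure_mono hsub
        _ ≤ ENNReal.ofReal α := hFA'
    -- the per-k bound
    have hbound : ∀ k : ℕ, w k * ν (k + 1) (EE (k + 1))
        ≤ ENNReal.ofReal (sa * ((((1 - ρ) ^ (K + 1))⁻¹ + ρ * c₂) * r ^ k)) := by
      intro k
      set M : ℝ≥0∞ := ENNReal.ofReal (r ^ k / sa) with hM
      have hM0 : M ≠ 0 := by
        rw [hM]
        simp only [ne_eq, ENNReal.ofReal_eq_zero, not_le]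
        positivity
      have hMt : M ≠ ∞ := ENNReal.ofReal_ne_top
      have hwne0 : w (k + 1 + K) ≠ 0 := by
        rw [hw]
        simp only [ne_eq, ENNReal.ofReal_eq_zero, not_le]
        positivity
      have hwnet : w (k + 1 + K) ≠ ∞ := by rw [hw]; exact ENNReal.ofReal_ne_top
      have hν0 : ν (k + 1 + K + 1) (EE (k + 1)) ≤ ENNReal.ofReal α / w (k + 1 + K) := by
        rw [ENNReal.le_div_iff_mul_le (Or.inl hwne0) (Or.inl hwnet), mul_comm]
        exact hFAj (k + 1) (by omega)
      have hcore := my_core σ A hσ (k + 1) K (by omega) (hSSmeas (k + 1)) hM0 hMt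
      have step1 : ν (k + 1) (EE (k + 1))
          ≤ M * (ENNReal.ofReal α / w (k + 1 + K)) + ENNReal.ofReal c₂ / M := by
        rw [hEEj (k + 1) (by omega)]
        refine hcore.trans ?_
        rw [hc₂]
        gcongr
        rw [← hEE0 (k + 1) (by omega)]
        exact hν0
      have step2 : w k * ν (k + 1) (EE (k + 1))
          ≤ w k * (M * (ENNReal.ofReal α / w (k + 1 + K)) + ENNReal.ofReal c₂ / M) :=
        mul_le_mul_right step1 _
      refine step2.trans ?_
      -- convert everything to `ofReal` of a real number
      have hx1 : (0:ℝ) ≤ r ^ k / sa := div_nonneg (pow_nonneg hr0.le k) hsa0.le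
      have hx2 : (0:ℝ) ≤ α / ((1 - ρ) ^ (k + 1 + K) * ρ) :=
        div_nonneg hα.1.le (mul_nonneg (pow_nonneg h1ρ.le _) hρ0.le)
      have hx3 : (0:ℝ) < r ^ k / sa := div_pos (pow_pos hr0 k) hsa0
      have e1 : ENNReal.ofReal α / w (k + 1 + K)
          = ENNReal.ofReal (α / ((1 - ρ) ^ (k + 1 + K) * ρ)) := by
        simp only [hw]
        exact (ENNReal.ofReal_div_of_pos (by positivity)).symm
      have e2 : ENNReal.ofReal c₂ / M = ENNReal.ofReal (c₂ / (r ^ k / sa)) := by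
        simp only [hM]
        exact (ENNReal.ofReal_div_of_pos hx3).symm
      have e3 : M * ENNReal.ofReal (α / ((1 - ρ) ^ (k + 1 + K) * ρ))
          = ENNReal.ofReal (r ^ k / sa * (α / ((1 - ρ) ^ (k + 1 + K) * ρ))) := by
        simp only [hM]
        exact (ENNReal.ofReal_mul hx1).symm
      have e4 : w k = ENNReal.ofReal ((1 - ρ) ^ k * ρ) := by simp only [hw]
      rw [e1, e2, e3, e4,
        ← ENNReal.ofReal_add (mul_nonneg hx1 hx2) (div_nonneg hc₂0.le hx3.le),
        ← ENNReal.ofReal_mul (mul_nonneg (pow_nonneg h1ρ.le _) hρ0.le)]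
      apply ENNReal.ofReal_le_ofReal
      apply le_of_eq
      rw [hr2, hsa2]
      have hρ0' : ρ ≠ 0 := hρ0.ne'
      have hr0' : r ≠ 0 := hr0.ne'
      have hsa0' : sa ≠ 0 := hsa0.ne'
      field_simp
      ring
    -- assemble
    set Z : Set (ℕ × (ℕ → ℝ)) := ({0} : Set ℕ) ×ˢ (univ : Set (ℕ → ℝ)) with hZ
    have hPZ : P Z = 0 := by
      rw [hPsum Z ((measurableSet_singleton _).prod MeasurableSet.univ)]
      have hterm : ∀ k : ℕ, (ENNReal.ofReal ((1 - ρ) ^ k * ρ)) •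
          ((Measure.dirac (k + 1)).prod (ν (k + 1))) Z = 0 := by
        intro k
        rw [smul_eq_mul, hZ, Measure.prod_prod,
          Measure.dirac_apply' _ (measurableSet_singleton _),
          Set.indicator_of_notMem (by simp)]
        simp
      simp_rw [hterm, tsum_zero]
    set B : Set (ℕ × (ℕ → ℝ)) := ⋃ k : ℕ, (({k + 1} : Set ℕ) ×ˢ EE (k + 1)) with hB
    have hc0 : (0:ℝ) ≤ ((1 - ρ) ^ (K + 1))⁻¹ + ρ * c₂ :=
      add_nonneg (inv_nonneg.2 (pow_nonneg h1ρ.le _)) (mul_nonneg hρ0.le hc₂0.le)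
    have hPB : P B ≤ ENNReal.ofReal (sa * C₃) := by
      calc P B ≤ ∑' k, P (({k + 1} : Set ℕ) ×ˢ EE (k + 1)) := measure_iUnion_le _
        _ = ∑' k, w k * ν (k + 1) (EE (k + 1)) := by
            congr 1
            funext k
            exact hL3 k _ (hEEmeas (k + 1) (by omega))
        _ ≤ ∑' k, ENNReal.ofReal (sa * ((((1 - ρ) ^ (K + 1))⁻¹ + ρ * c₂) * r ^ k)) :=
            ENNReal.tsum_le_tsum hbound
        _ = ENNReal.ofReal (∑' k, sa * ((((1 - ρ) ^ (K + 1))⁻¹ + ρ * c₂) * r ^ k)) := by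
            refine (ENNReal.ofReal_tsum_of_nonneg (fun k => ?_) ?_).symm
            · exact mul_nonneg hsa0.le (mul_nonneg hc0 (pow_nonneg hr0.le k))
            · have hfun : (fun k : ℕ => sa * ((((1 - ρ) ^ (K + 1))⁻¹ + ρ * c₂) * r ^ k))
                  = fun k : ℕ => (sa * (((1 - ρ) ^ (K + 1))⁻¹ + ρ * c₂)) * r ^ k := by
                funext k; ring
              rw [hfun]
              exact (summable_geometric_of_lt_one hr0.le hr1).mul_left _
        _ = ENNReal.ofReal (sa * C₃) := by
            congr 1
            have hfun : (fun k : ℕ => sa * ((((1 - ρ) ^ (K + 1))⁻¹ + ρ * c₂) * r ^ k))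
                = fun k : ℕ => (sa * (((1 - ρ) ^ (K + 1))⁻¹ + ρ * c₂)) * r ^ k := by
              funext k; ring
            rw [hfun, tsum_mul_left, tsum_geometric_of_lt_one hr0.le hr1, hC₃]
            ring
    have hcover : (univ : Set (ℕ × (ℕ → ℝ))) ⊆
        {ω : ℕ × (ℕ → ℝ) | ((ω.1 + K : ℕ) : ℕ∞) < t ω.2}
        ∪ ({ω : ℕ × (ℕ → ℝ) | t ω.2 < (ω.1 : ℕ∞)} ∪ (Z ∪ B)) := by
      rintro ⟨p, x⟩ -
      by_cases hT : (((p, x).1 + K : ℕ) : ℕ∞) < t x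
      · exact Or.inl hT
      · push_neg at hT
        right
        match p with
        | 0 =>
          exact Or.inr (Or.inl ⟨rfl, trivial⟩)
        | (k+1) =>
          by_cases hS : t x < ((k + 1 : ℕ) : ℕ∞)
          · exact Or.inl hS
          · push_neg at hS
            refine Or.inr (Or.inr ?_)
            rw [hB]
            exact Set.mem_iUnion.mpr ⟨k, ⟨rfl, hS, hT⟩⟩
    have h1le : (1:ℝ≥0∞) ≤ P {ω : ℕ × (ℕ → ℝ) | ((ω.1 + K : ℕ) : ℕ∞) < t ω.2}
        + ENNReal.ofReal (α + sa * C₃) := by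
      calc (1:ℝ≥0∞) = P univ := hPuniv.symm
        _ ≤ P ({ω : ℕ × (ℕ → ℝ) | ((ω.1 + K : ℕ) : ℕ∞) < t ω.2}
            ∪ ({ω : ℕ × (ℕ → ℝ) | t ω.2 < (ω.1 : ℕ∞)} ∪ (Z ∪ B))) := measure_mono hcover
        _ ≤ P {ω : ℕ × (ℕ → ℝ) | ((ω.1 + K : ℕ) : ℕ∞) < t ω.2}
            + P ({ω : ℕ × (ℕ → ℝ) | t ω.2 < (ω.1 : ℕ∞)} ∪ (Z ∪ B)) := measure_union_le _ _
        _ ≤ P {ω : ℕ × (ℕ → ℝ) | ((ω.1 + K : ℕ) : ℕ∞) < t ω.2}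
            + (P {ω : ℕ × (ℕ → ℝ) | t ω.2 < (ω.1 : ℕ∞)} + (P Z + P B)) := by
            refine add_le_add_right ((measure_union_le _ _).trans ?_) _
            exact add_le_add_right (measure_union_le _ _) _
        _ ≤ P {ω : ℕ × (ℕ → ℝ) | ((ω.1 + K : ℕ) : ℕ∞) < t ω.2}
            + (ENNReal.ofReal α + (0 + ENNReal.ofReal (sa * C₃))) := by
            refine add_le_add_right (add_le_add hFA' (add_le_add (le_of_eq hPZ) hPB)) _
        _ = P {ω : ℕ × (ℕ → ℝ) | ((ω.1 + K : ℕ) : ℕ∞) < t ω.2}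
            + ENNReal.ofReal (α + sa * C₃) := by
            rw [zero_add, ← ENNReal.ofReal_add hα.1.le (mul_nonneg hsa0.le hC₃0.le)]
    exact tsub_le_iff_right.mpr h1le
  -- pass to the limit
  have hg : Tendsto (fun α : ℝ => ENNReal.ofReal (α + Real.sqrt α * C₃))
      (nhdsWithin 0 (Set.Ioo (0 : ℝ) 1)) (nhds 0) := by
    have hcont : Tendsto (fun α : ℝ => α + Real.sqrt α * C₃) (nhds 0) (nhds 0) := by
      have hc : Continuous fun α : ℝ => α + Real.sqrt α * C₃ :=
        continuous_id.add (Real.continuous_sqrt.mul continuous_const)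
      have h0 : (0:ℝ) + Real.sqrt 0 * C₃ = 0 := by simp
      simpa [h0] using hc.tendsto 0
    have := (ENNReal.continuous_ofReal.tendsto 0).comp
      (hcont.mono_left (nhdsWithin_le_nhds (s := Set.Ioo (0:ℝ) 1)))
    simpa [Function.comp_def] using this
  have hlim : Tendsto (fun α : ℝ => (1:ℝ≥0∞) - ENNReal.ofReal (α + Real.sqrt α * C₃))
      (nhdsWithin 0 (Set.Ioo (0 : ℝ) 1)) (nhds 1) := by
    have := ENNReal.Tendsto.sub (tendsto_const_nhds (x := (1:ℝ≥0∞))) hg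
      (Or.inl ENNReal.one_ne_top)
    simpa using this
  refine tendsto_of_tendsto_of_tendsto_of_le_of_le' hlim tendsto_const_nhds ?_ ?_
  · exact eventually_mem_nhdsWithin.mono fun α hα => key α hα
  · refine Eventually.of_forall fun α => ?_
    exact le_trans (measure_mono (subset_univ _)) (le_of_eq hPuniv)

end
end

section
/- For every family (τ_α)_{α∈(0,1)} of detection rules in the change-point model satisfying P(τ_α < Γ) ≤ α for all α ∈ (0,1), the probability of a delay of exactly one step decays essentially like α: for every ε > 0 there exists α₀ ∈ (0,1) such that P(τ_α = Γ + 1) ≤ α^{1−ε} for all 0 < α < α₀. (This is the precise upper-bound content of the Appendix Lemma asserting Pr(τ = Γ + 1) ≐ Pr(Γ > τ) = α.) -/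
open MeasureTheory ProbabilityTheory Filter Set
open scoped ENNReal NNReal Real

noncomputable section

set_option maxHeartbeats 2000000

section Aux

open scoped ENNReal NNReal Real

theorem lintegral_pi_prod : ∀ {n : ℕ} (μ : Fin n → Measure ℝ), (∀ i, SigmaFinite (μ i)) →
    ∀ (f : Fin n → ℝ → ℝ≥0∞), (∀ i, Measurable (f i)) →
    ∫⁻ x, ∏ i, f i (x i) ∂(Measure.pi μ) = ∏ i, ∫⁻ y, f i y ∂(μ i) := by
  intro n
  induction n with
  | zero => intro μ _ f _; simp [Measure.pi_of_empty]
  | succ n ih =>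
    intro μ hμ f hf
    haveI := hμ
    have hmp := measurePreserving_piFinSuccAbove μ 0
    have hemb := (MeasurableEquiv.piFinSuccAbove (fun _ : Fin (n+1) => ℝ) 0).measurableEmbedding
    have key := hmp.lintegral_comp_emb hemb
      (fun z : ℝ × (Fin n → ℝ) => f 0 z.1 * ∏ i : Fin n, f i.succ (z.2 i))
    rw [show (fun x : Fin (n+1) → ℝ => ∏ i, f i (x i)) = fun x =>
        (fun z : ℝ × (Fin n → ℝ) => f 0 z.1 * ∏ i : Fin n, f i.succ (z.2 i))
          ((MeasurableEquiv.piFinSuccAbove (fun _ : Fin (n+1) => ℝ) 0) x) from ?_, key]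
    · have hmeas : Measurable (fun y : Fin n → ℝ => ∏ i : Fin n, f i.succ (y i)) :=
        Finset.measurable_prod Finset.univ fun i _ =>
          (hf i.succ).comp (measurable_pi_apply i)
      refine (lintegral_prod_mul (hf 0).aemeasurable hmeas.aemeasurable).trans ?_
      have : (fun j : Fin n => μ (Fin.succAbove 0 j)) = fun j => μ j.succ := by
        funext j; rw [Fin.zero_succAbove]
      rw [this, ih _ (fun i => inferInstance) _ (fun i => hf i.succ), Fin.prod_univ_succ]
    · funext x
      simp only [MeasurableEquiv.piFinSuccAbove_apply, Fin.prod_univ_succ]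
      congr 1

theorem pi_withDensity {n : ℕ} (μ : Fin n → Measure ℝ) [∀ i, SigmaFinite (μ i)]
    (f : Fin n → ℝ → ℝ≥0∞) (hf : ∀ i, Measurable (f i))
    [∀ i, SigmaFinite ((μ i).withDensity (f i))] :
    Measure.pi (fun i => (μ i).withDensity (f i)) =
      (Measure.pi μ).withDensity (fun x => ∏ i, f i (x i)) := by
  refine Measure.pi_eq (μ := fun i => (μ i).withDensity (f i)) fun s hs => ?_
  rw [withDensity_apply _ (MeasurableSet.univ_pi hs),
    ← lintegral_indicator (MeasurableSet.univ_pi hs) (fun x => ∏ i, f i (x i))]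
  have : ∀ x : Fin n → ℝ, (Set.univ.pi s).indicator (fun x => ∏ i, f i (x i)) x
      = ∏ i, (s i).indicator (f i) (x i) := by
    intro x
    by_cases hx : x ∈ Set.univ.pi s
    · rw [Set.indicator_of_mem hx]
      exact Finset.prod_congr rfl fun i _ => (Set.indicator_of_mem (hx i trivial) _).symm
    · rw [Set.indicator_of_notMem hx]
      rw [Set.mem_univ_pi] at hx
      push_neg at hx
      obtain ⟨i, hi⟩ := hx
      exact (Finset.prod_eq_zero (Finset.mem_univ i)
        (by rw [Set.indicator_of_notMem hi])).symm
  simp_rw [this]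
  rw [lintegral_pi_prod μ (fun i => inferInstance) _
    (fun i => (hf i).indicator (hs i))]
  exact Finset.prod_congr rfl fun i _ => by
    rw [lintegral_indicator (hs i), withDensity_apply _ (hs i)]

theorem gaussian_ratio (A : ℝ) (v : ℝ≥0) (hv : v ≠ 0) :
    gaussianReal A v = (gaussianReal 0 v).withDensity
      (fun x => ENNReal.ofReal (Real.exp ((2*A*x - A^2)/(2*(v:ℝ))))) := by
  have hr : Measurable (fun x : ℝ => ENNReal.ofReal (Real.exp ((2*A*x - A^2)/(2*(v:ℝ))))) := by
    fun_prop
  rw [gaussianReal_of_var_ne_zero _ hv, gaussianReal_of_var_ne_zero _ hv,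
    ← withDensity_mul _ (measurable_gaussianPDF _ _) hr]
  congr 1
  funext x
  have hvpos : (0:ℝ) < (v:ℝ) := by positivity
  simp only [gaussianPDF_def, Pi.mul_apply]
  rw [← ENNReal.ofReal_mul (gaussianPDFReal_nonneg _ _ _)]
  congr 1
  unfold gaussianPDFReal
  have : Real.exp (-(x - A)^2/(2*(v:ℝ))) =
      Real.exp (-(x-0)^2/(2*(v:ℝ))) * Real.exp ((2*A*x - A^2)/(2*(v:ℝ))) := by
    rw [← Real.exp_add]
    congr 1
    field_simp
    ring
  rw [this]
  ring

theorem gaussian_tail (A u : ℝ) (v : ℝ≥0) (hv : v ≠ 0) (hu : A ≤ u) :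
    gaussianReal A v (Set.Ioi u) ≤
      ENNReal.ofReal (Real.sqrt 2 * Real.exp (-(u-A)^2/(4*(v:ℝ)))) := by
  have hvpos : (0:ℝ) < (v:ℝ) := by positivity
  have h2v : (2*v : ℝ≥0) ≠ 0 := by simp [hv]
  have hcast : ((2*v:ℝ≥0):ℝ) = 2*(v:ℝ) := by push_cast; ring
  rw [gaussianReal_apply _ hv]
  have hpt : ∀ x ∈ Set.Ioi u, gaussianPDF A v x ≤
      ENNReal.ofReal (Real.sqrt 2 * Real.exp (-(u-A)^2/(4*(v:ℝ)))) * gaussianPDF A (2*v) x := by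
    intro x hx
    simp only [gaussianPDF_def]
    rw [← ENNReal.ofReal_mul (by positivity)]
    apply ENNReal.ofReal_le_ofReal
    unfold gaussianPDFReal
    have hx' : u ≤ x := le_of_lt hx
    have h1 : (u-A)^2 ≤ (x-A)^2 := by nlinarith
    have key : Real.exp (-(x - A)^2 / (2*(v:ℝ))) ≤
        Real.exp (-(u-A)^2/(4*(v:ℝ))) * Real.exp (-(x - A)^2 / (2*((2*v:ℝ≥0):ℝ))) := by
      rw [← Real.exp_add, hcast]
      apply Real.exp_le_exp.2
      rw [show -(x - A)^2 / (2*(v:ℝ)) = (-2*(x-A)^2)/(4*(v:ℝ)) by ring,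
        show -(u-A)^2/(4*(v:ℝ)) + -(x - A)^2 / (2*(2*(v:ℝ)))
          = (-(u-A)^2 + -(x-A)^2)/(4*(v:ℝ)) by ring]
      apply div_le_div_of_nonneg_right ?_ (by positivity)
      · linarith
    have hnorm : (Real.sqrt (2 * Real.pi * (v:ℝ)))⁻¹ =
        Real.sqrt 2 * (Real.sqrt (2 * Real.pi * ((2*v:ℝ≥0):ℝ)))⁻¹ := by
      have hsq : Real.sqrt (2 * Real.pi * ((2*v:ℝ≥0):ℝ))
          = Real.sqrt 2 * Real.sqrt (2 * Real.pi * (v:ℝ)) := by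
        rw [hcast, show 2 * Real.pi * (2*(v:ℝ)) = 2 * (2 * Real.pi * (v:ℝ)) by ring,
          Real.sqrt_mul (by norm_num : (0:ℝ) ≤ 2)]
      have hs2 : Real.sqrt 2 ≠ 0 := by positivity
      rw [hsq, mul_inv, ← mul_assoc, mul_inv_cancel₀ hs2, one_mul]
    calc (Real.sqrt (2 * Real.pi * (v:ℝ)))⁻¹ * Real.exp (-(x - A)^2 / (2*(v:ℝ)))
        ≤ (Real.sqrt 2 * (Real.sqrt (2 * Real.pi * ((2*v:ℝ≥0):ℝ)))⁻¹) *
          (Real.exp (-(u-A)^2/(4*(v:ℝ))) * Real.exp (-(x - A)^2 / (2*((2*v:ℝ≥0):ℝ)))) := by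
          rw [← hnorm]
          exact mul_le_mul_of_nonneg_left key (by positivity)
      _ = Real.sqrt 2 * Real.exp (-(u-A)^2/(4*(v:ℝ))) *
          ((Real.sqrt (2 * Real.pi * ((2*v:ℝ≥0):ℝ)))⁻¹ *
            Real.exp (-(x - A)^2 / (2*((2*v:ℝ≥0):ℝ)))) := by ring
  have hmeas : Measurable (fun x => ENNReal.ofReal (Real.sqrt 2 *
      Real.exp (-(u-A)^2/(4*(v:ℝ)))) * gaussianPDF A (2*v) x) :=
    (measurable_gaussianPDF _ _).const_mul _
  calc ∫⁻ x in Set.Ioi u, gaussianPDF A v x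
      ≤ ∫⁻ x in Set.Ioi u, ENNReal.ofReal (Real.sqrt 2 * Real.exp (-(u-A)^2/(4*(v:ℝ)))) *
          gaussianPDF A (2*v) x := setLIntegral_mono hmeas hpt
    _ = ENNReal.ofReal (Real.sqrt 2 * Real.exp (-(u-A)^2/(4*(v:ℝ)))) *
          ∫⁻ x in Set.Ioi u, gaussianPDF A (2*v) x := by
        rw [lintegral_const_mul _ (measurable_gaussianPDF _ _)]
    _ ≤ ENNReal.ofReal (Real.sqrt 2 * Real.exp (-(u-A)^2/(4*(v:ℝ)))) * 1 := by
        apply mul_le_mul_right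
        rw [← gaussianReal_apply _ h2v]
        exact prob_le_one
    _ = _ := mul_one _

theorem quad_dominates (a b d e : ℝ) (ha : 0 < a) :
    ∃ L₀ : ℝ, ∀ L, L₀ ≤ L → d*L + e ≤ (a*L - b)^2 := by
  refine ⟨(b + |d|/a + Real.sqrt (max (d*b/a + e) 0))/a + 1, fun L hL => ?_⟩
  set s := Real.sqrt (max (d*b/a + e) 0) with hs
  have hs0 : 0 ≤ s := Real.sqrt_nonneg _
  have hs2 : d*b/a + e ≤ s^2 := by
    rw [hs, Real.sq_sqrt (le_max_right _ _)]
    exact le_max_left _ _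
  have hm : a*L - b ≥ |d|/a + s + a := by
    have h2 := mul_le_mul_of_nonneg_left hL (le_of_lt ha)
    rw [mul_add, mul_div_cancel₀ _ (ne_of_gt ha), mul_one] at h2
    linarith
  have hd : d ≤ |d| := le_abs_self d
  have hda : 0 ≤ |d|/a := by positivity
  have hm0 : 0 ≤ a*L - b := by linarith
  have hdl : d*L + e = (d/a)*(a*L - b) + (d*b/a + e) := by field_simp; ring
  have h4 : (d/a) * (a*L-b) ≤ (|d|/a) * (a*L-b) := by
    apply mul_le_mul_of_nonneg_right _ hm0
    gcongr
  have h5 : (|d|/a)*(a*L-b) + s^2 ≤ (a*L-b)^2 := by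
    nlinarith [mul_nonneg hs0 (by linarith : (0:ℝ) ≤ (a*L-b) - s),
      mul_nonneg hm0 (by linarith : (0:ℝ) ≤ (a*L-b) - |d|/a - s)]
  linarith

theorem term1_aux (X q a Y : ℝ) (hq : 0 ≤ q) (ha : 0 ≤ a) (hXY : X * X * a = Y)
    (h2 : 2*q ≤ X) (hX : 0 ≤ X) : X * (q * a) ≤ Y/2 := by
  nlinarith [mul_le_mul_of_nonneg_right h2 (mul_nonneg hX ha)]

theorem perk_bound (A : ℝ) (hA : 0 < A) (v : ℝ≥0) (hv : v ≠ 0) (k : ℕ)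
    (S : Set (Fin (k+2) → ℝ)) (hS : MeasurableSet S) (t : ℝ) (ht : 2*A ≤ t) :
    Measure.pi (fun i : Fin (k+2) =>
        if (i:ℕ)+1 < k+1 then gaussianReal 0 v else gaussianReal A v) S
      ≤ ENNReal.ofReal (Real.exp ((2*A*t - 2*A^2)/(2*(v:ℝ)))) *
          Measure.pi (fun _ : Fin (k+2) => gaussianReal 0 v) S
        + 2 * ENNReal.ofReal (Real.sqrt 2 * Real.exp (-(t/2-A)^2/(4*(v:ℝ)))) := by
  have hvpos : (0:ℝ) < (v:ℝ) := by positivity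
  haveI : ∀ i : Fin (k+2), SigmaFinite
      (if (i:ℕ)+1 < k+1 then gaussianReal 0 v else gaussianReal A v) := by
    intro i; split <;> infer_instance
  set j₁ : Fin (k+2) := ⟨k, by omega⟩ with hj₁
  set j₂ : Fin (k+2) := ⟨k+1, by omega⟩ with hj₂
  set r : ℝ → ℝ≥0∞ := fun x => ENNReal.ofReal (Real.exp ((2*A*x - A^2)/(2*(v:ℝ)))) with hr
  have hrmeas : Measurable r := by fun_prop
  set f : Fin (k+2) → ℝ → ℝ≥0∞ := fun i => if (i:ℕ)+1 < k+1 then 1 else r with hfdef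
  have hfmeas : ∀ i, Measurable (f i) := by
    intro i; rw [hfdef]; dsimp only; split
    · exact measurable_one
    · exact hrmeas
  have hfactor : ∀ i : Fin (k+2),
      (if (i:ℕ)+1 < k+1 then gaussianReal 0 v else gaussianReal A v)
        = (gaussianReal 0 v).withDensity (f i) := by
    intro i
    rw [hfdef]; dsimp only; split
    · rw [withDensity_one]
    · exact gaussian_ratio A v hv
  haveI hSF : ∀ i : Fin (k+2), SigmaFinite ((gaussianReal 0 v).withDensity (f i)) := by
    intro i
    rw [← hfactor i]
    split
    · infer_instance
    · infer_instance
  have hμ1 : Measure.pi (fun i : Fin (k+2) =>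
      if (i:ℕ)+1 < k+1 then gaussianReal 0 v else gaussianReal A v)
      = (Measure.pi fun _ : Fin (k+2) => gaussianReal 0 v).withDensity
          (fun x => ∏ i, f i (x i)) := by
    rw [show (fun i : Fin (k+2) =>
        if (i:ℕ)+1 < k+1 then gaussianReal 0 v else gaussianReal A v)
        = fun i => (gaussianReal 0 v).withDensity (f i) from funext hfactor]
    exact pi_withDensity _ _ hfmeas
  have hprod : ∀ x : Fin (k+2) → ℝ, (∏ i, f i (x i)) = r (x j₁) * r (x j₂) := by
    intro x
    have h1 : ∀ i : Fin (k+2), f i (x i) = if (i:ℕ)+1 < k+1 then 1 else r (x i) := by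
      intro i; rw [hfdef]; dsimp only; split <;> rfl
    rw [Finset.prod_congr rfl fun i _ => h1 i, Finset.prod_ite, Finset.prod_const_one, one_mul]
    have h2 : Finset.univ.filter (fun i : Fin (k+2) => ¬((i:ℕ)+1 < k+1)) = {j₁, j₂} := by
      ext i
      simp only [Finset.mem_filter, Finset.mem_univ, true_and, Finset.mem_insert,
        Finset.mem_singleton, Fin.ext_iff, hj₁, hj₂]
      omega
    rw [h2, Finset.prod_insert (by simp [Fin.ext_iff, hj₁, hj₂]), Finset.prod_singleton]
  set T : Set (Fin (k+2) → ℝ) := {y | y j₁ + y j₂ ≤ t} with hT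
  have hTmeas : MeasurableSet T := by
    apply measurableSet_le <;> fun_prop
  have hsplit : Measure.pi (fun i : Fin (k+2) =>
      if (i:ℕ)+1 < k+1 then gaussianReal 0 v else gaussianReal A v) S
      ≤ Measure.pi (fun i : Fin (k+2) =>
          if (i:ℕ)+1 < k+1 then gaussianReal 0 v else gaussianReal A v) (S ∩ T)
        + Measure.pi (fun i : Fin (k+2) =>
            if (i:ℕ)+1 < k+1 then gaussianReal 0 v else gaussianReal A v) Tᶜ := by
    refine le_trans (measure_mono ?_) (measure_union_le _ _)
    intro y hy
    by_cases h : y ∈ T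
    · exact Or.inl ⟨hy, h⟩
    · exact Or.inr h
  refine le_trans hsplit (add_le_add ?_ ?_)
  · rw [hμ1, withDensity_apply _ (hS.inter hTmeas)]
    calc ∫⁻ x in S ∩ T, ∏ i, f i (x i)
          ∂(Measure.pi fun _ : Fin (k+2) => gaussianReal 0 v)
        ≤ ∫⁻ _x in S ∩ T, ENNReal.ofReal (Real.exp ((2*A*t - 2*A^2)/(2*(v:ℝ))))
          ∂(Measure.pi fun _ : Fin (k+2) => gaussianReal 0 v) := by
          apply setLIntegral_mono measurable_const
          intro x hx
          rw [hprod x, hr]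
          dsimp only
          rw [← ENNReal.ofReal_mul (Real.exp_nonneg _), ← Real.exp_add]
          apply ENNReal.ofReal_le_ofReal
          apply Real.exp_le_exp.2
          rw [← add_div]
          apply div_le_div_of_nonneg_right ?_ (by positivity)
          have hxt : x j₁ + x j₂ ≤ t := hx.2
          nlinarith
      _ = ENNReal.ofReal (Real.exp ((2*A*t - 2*A^2)/(2*(v:ℝ)))) *
            (Measure.pi fun _ : Fin (k+2) => gaussianReal 0 v) (S ∩ T) := by
          rw [setLIntegral_const]
      _ ≤ _ := mul_le_mul_right (measure_mono Set.inter_subset_left) _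
  · have hsub : Tᶜ ⊆ {y : Fin (k+2) → ℝ | t/2 < y j₁} ∪ {y | t/2 < y j₂} := by
      intro y hy
      simp only [hT, Set.mem_compl_iff, Set.mem_setOf_eq, not_le] at hy
      by_contra h
      simp only [Set.mem_union, Set.mem_setOf_eq, not_or, not_lt] at h
      linarith [h.1, h.2]
    have hmarg : ∀ j : Fin (k+2), ¬((j:ℕ)+1 < k+1) →
        Measure.pi (fun i : Fin (k+2) =>
          if (i:ℕ)+1 < k+1 then gaussianReal 0 v else gaussianReal A v)
          {y | t/2 < y j}
          ≤ ENNReal.ofReal (Real.sqrt 2 * Real.exp (-(t/2-A)^2/(4*(v:ℝ)))) := by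
      intro j hj
      have hset : {y : Fin (k+2) → ℝ | t/2 < y j}
          = Set.pi Set.univ (Function.update (fun _ : Fin (k+2) => Set.univ) j (Set.Ioi (t/2))) := by
        rw [← Set.eval_preimage]
        rfl
      rw [hset, Measure.pi_pi]
      have hone : ∀ i : Fin (k+2), i ≠ j →
          (if (i:ℕ)+1 < k+1 then gaussianReal 0 v else gaussianReal A v)
            (Function.update (fun _ : Fin (k+2) => Set.univ) j (Set.Ioi (t/2)) i) = 1 := by
        intro i hi
        rw [Function.update_of_ne hi]
        split
        · exact measure_univ
        · exact measure_univ
      rw [Finset.prod_eq_single j (fun i _ hi => hone i hi) (by simp)]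
      rw [Function.update_self, if_neg hj]
      exact gaussian_tail A (t/2) v hv (by linarith)
    calc Measure.pi (fun i : Fin (k+2) =>
          if (i:ℕ)+1 < k+1 then gaussianReal 0 v else gaussianReal A v) Tᶜ
        ≤ Measure.pi _ {y : Fin (k+2) → ℝ | t/2 < y j₁}
          + Measure.pi _ {y : Fin (k+2) → ℝ | t/2 < y j₂} :=
          le_trans (measure_mono hsub) (measure_union_le _ _)
      _ ≤ ENNReal.ofReal (Real.sqrt 2 * Real.exp (-(t/2-A)^2/(4*(v:ℝ))))
          + ENNReal.ofReal (Real.sqrt 2 * Real.exp (-(t/2-A)^2/(4*(v:ℝ)))) :=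
          add_le_add (hmarg j₁ (by simp [hj₁])) (hmarg j₂ (by simp [hj₂]))
      _ = 2 * ENNReal.ofReal (Real.sqrt 2 * Real.exp (-(t/2-A)^2/(4*(v:ℝ)))) := by
          rw [two_mul]

end Aux

/-- for any family of detection rules with false-alarm probability at most `α`,
the probability of a delay of exactly one step decays essentially like `α`: for every `ε > 0`
there is `α₀ ∈ (0,1)` with `P(τ_α = Γ + 1) ≤ α^{1−ε}` for all `0 < α < α₀`. -/
theorem detection_delay_one_prob_le_rpow
    (σ A ρ : ℝ) (hσ : 0 < σ) (hA : 0 < A) (hρ : ρ ∈ Set.Ioo (0 : ℝ) 1)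
    (ν : ℕ → Measure (ℕ → ℝ)) (hν : IsChangePointFamily σ A ν)
    (τ : ℝ → (ℕ → ℝ) → ℕ∞)
    (hτ : ∀ α ∈ Set.Ioo (0 : ℝ) 1, IsDetectionRule (τ α))
    (hFA : ∀ α ∈ Set.Ioo (0 : ℝ) 1,
      changePointMeasure ρ ν {ω | τ α ω.2 < (ω.1 : ℕ∞)} ≤ ENNReal.ofReal α) :
    ∀ ε > (0 : ℝ), ∃ α₀ ∈ Set.Ioo (0 : ℝ) 1, ∀ α : ℝ, 0 < α → α < α₀ →
      changePointMeasure ρ ν {ω | τ α ω.2 = ((ω.1 + 1 : ℕ) : ℕ∞)}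
        ≤ ENNReal.ofReal (α ^ (1 - ε)) := by
  obtain ⟨hρ0, hρ1⟩ := hρ
  haveI hprob : ∀ k, IsProbabilityMeasure (ν k) := hν.1
  intro ε hε
  set v : ℝ≥0 := ⟨σ^2, sq_nonneg σ⟩ with hvdef
  have hvR : (v:ℝ) = σ^2 := rfl
  have hvpos : (0:ℝ) < (v:ℝ) := by rw [hvR]; positivity
  have hv : v ≠ 0 := by
    intro h
    rw [h] at hvpos
    simp at hvpos
  have h1ρ : (0:ℝ) < 1 - ρ := by linarith
  set ε' : ℝ := min ε (1/2) with hε'def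
  have hε'pos : 0 < ε' := lt_min hε (by norm_num)
  have hε'le : ε' ≤ ε := min_le_left _ _
  have hε'half : ε' ≤ 1/2 := min_le_right _ _
  clear_value ε'
  set c : ℝ := ε' * (v:ℝ) / (4*A) with hcdef
  have hcpos : 0 < c := by rw [hcdef]; positivity
  obtain ⟨L₂, hL₂⟩ := quad_dominates c (A/2) (4*(v:ℝ)*(1-ε'))
    (4*(v:ℝ)*Real.log (4*Real.sqrt 2)) hcpos
  clear_value c
  set Lmax : ℝ := max (max L₂ ((2/ε') * Real.log (2*(1-ρ)⁻¹^2)))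
    (max (2*A^2/(ε'*(v:ℝ))) 1) with hLmax
  refine ⟨min (Real.exp (-Lmax)) (1/2),
    ⟨lt_min (Real.exp_pos _) (by norm_num),
      lt_of_le_of_lt (min_le_right _ _) (by norm_num)⟩, ?_⟩
  intro α hα0 hαlt
  have hαhalf : α < 1/2 := lt_of_lt_of_le hαlt (min_le_right _ _)
  have hα1 : α < 1 := by linarith
  have hαIoo : α ∈ Set.Ioo (0:ℝ) 1 := ⟨hα0, hα1⟩
  set L : ℝ := -Real.log α with hLdef
  have hαexp : α = Real.exp (-L) := by rw [hLdef, neg_neg, Real.exp_log hα0]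
  have hLgt : Lmax < L := by
    have h1 : α < Real.exp (-Lmax) := lt_of_lt_of_le hαlt (min_le_left _ _)
    have h2 := Real.log_lt_log hα0 h1
    rw [Real.log_exp] at h2
    rw [hLdef]
    linarith
  have hLq : L₂ ≤ L := le_of_lt (lt_of_le_of_lt (le_trans (le_max_left _ _) (le_max_left _ _)) hLgt)
  have hL1 : (2/ε') * Real.log (2*(1-ρ)⁻¹^2) ≤ L :=
    le_of_lt (lt_of_le_of_lt (le_trans (le_max_right _ _) (le_max_left _ _)) hLgt)
  have hL3 : 2*A^2/(ε'*(v:ℝ)) ≤ L :=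
    le_of_lt (lt_of_le_of_lt (le_trans (le_max_left _ _) (le_max_right _ _)) hLgt)
  have hLone : (1:ℝ) ≤ L :=
    le_of_lt (lt_of_le_of_lt (le_trans (le_max_right _ _) (le_max_right _ _)) hLgt)
  clear_value L
  set t : ℝ := ε' * L * (v:ℝ) / (2*A) + A with htdef
  have ht2A : 2*A ≤ t := by
    have h2 : 2*A^2 ≤ L * (ε'*(v:ℝ)) := (div_le_iff₀ (by positivity)).mp hL3
    have hstep : A ≤ ε' * L * (v:ℝ) / (2*A) := by
      rw [le_div_iff₀ (by positivity : (0:ℝ) < 2*A)]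
      nlinarith
    rw [htdef]
    linarith
  clear_value t
  -- detection rule and sections
  have hτα := hτ α hαIoo
  have hproj : ∀ n : ℕ, Measurable (fun x : ℕ → ℝ => fun i : Fin n => x i) :=
    fun n => measurable_pi_lambda _ fun i => measurable_pi_apply _
  choose S hSmeas hSpre using
    fun k : ℕ => MeasurableSpace.measurableSet_comap.mp (hτα (k+2) (by omega))
  set B : ℕ → Set (ℕ → ℝ) := fun n => {x | τ α x = (n:ℕ∞)} with hBdef
  have hBmeas : ∀ n, 1 ≤ n → MeasurableSet (B n) := by
    intro n hn
    obtain ⟨s, hs, hpre⟩ := MeasurableSpace.measurableSet_comap.mp (hτα n hn)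
    rw [hBdef]
    dsimp only
    rw [← hpre]
    exact hproj n hs
  have hBpre : ∀ k : ℕ, (fun x : ℕ → ℝ => fun i : Fin (k+2) => x i) ⁻¹' (S k) = B (k+2) :=
    fun k => hSpre k
  -- the target event
  set Ev : Set (ℕ × (ℕ → ℝ)) := {ω | τ α ω.2 = ((ω.1 + 1 : ℕ) : ℕ∞)} with hEvdef
  have hEvU : Ev = ⋃ n : ℕ, ({n} : Set ℕ) ×ˢ B (n+1) := by
    ext ω
    simp only [hEvdef, Set.mem_setOf_eq, Set.mem_iUnion, Set.mem_prod,
      Set.mem_singleton_iff, hBdef]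
    constructor
    · intro h
      exact ⟨ω.1, rfl, by exact_mod_cast h⟩
    · rintro ⟨n, h1, h2⟩
      rw [h1]
      exact_mod_cast h2
  have hEvmeas : MeasurableSet Ev := by
    rw [hEvU]
    exact MeasurableSet.iUnion fun n =>
      (measurableSet_singleton n).prod (hBmeas (n+1) (by omega))
  have hPEv : changePointMeasure ρ ν Ev
      = ∑' k, ENNReal.ofReal ((1-ρ)^k * ρ) * ν (k+1) (B (k+2)) := by
    rw [changePointMeasure, Measure.sum_apply _ hEvmeas]
    apply tsum_congr
    intro k
    rw [Measure.smul_apply, Measure.dirac_prod,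
      Measure.map_apply measurable_prodMk_left hEvmeas, smul_eq_mul]
    congr 1
  -- the false-alarm lower-bound event
  set Ev' : Set (ℕ × (ℕ → ℝ)) := ⋃ k : ℕ, ({k+3} : Set ℕ) ×ˢ B (k+2) with hEv'def
  have hEv'meas : MeasurableSet Ev' :=
    MeasurableSet.iUnion fun k => (measurableSet_singleton _).prod (hBmeas (k+2) (by omega))
  have hEv'sub : Ev' ⊆ {ω | τ α ω.2 < (ω.1 : ℕ∞)} := by
    rintro ⟨n, x⟩ h
    simp only [hEv'def, Set.mem_iUnion, Set.mem_prod, Set.mem_singleton_iff, hBdef,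
      Set.mem_setOf_eq] at h ⊢
    obtain ⟨k, h1, h2⟩ := h
    rw [h1, h2]
    exact_mod_cast Nat.cast_lt.mpr (by omega : k+2 < k+3)
  have hPEv' : changePointMeasure ρ ν Ev'
      = ∑' j, ENNReal.ofReal ((1-ρ)^j * ρ) * ν (j+1) (Prod.mk (j+1) ⁻¹' Ev') := by
    rw [changePointMeasure, Measure.sum_apply _ hEv'meas]
    apply tsum_congr
    intro j
    rw [Measure.smul_apply, Measure.dirac_prod,
      Measure.map_apply measurable_prodMk_left hEv'meas, smul_eq_mul]
  have hsec : ∀ k : ℕ, Prod.mk (k+3) ⁻¹' Ev' = B (k+2) := by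
    intro k
    ext x
    simp only [hEv'def, Set.mem_preimage, Set.mem_iUnion, Set.mem_prod,
      Set.mem_singleton_iff]
    constructor
    · rintro ⟨m, h1, h2⟩
      have : m = k := by omega
      rwa [this] at h2
    · intro h
      exact ⟨k, rfl, h⟩
  have hFAsum : ∑' k, ENNReal.ofReal ((1-ρ)^(k+2) * ρ) * ν (k+3) (B (k+2))
      ≤ ENNReal.ofReal α := by
    calc ∑' k, ENNReal.ofReal ((1-ρ)^(k+2) * ρ) * ν (k+3) (B (k+2))
        ≤ ∑' j, ENNReal.ofReal ((1-ρ)^j * ρ) * ν (j+1) (Prod.mk (j+1) ⁻¹' Ev') := by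
          refine Summable.tsum_le_tsum_of_inj (fun k : ℕ => k + 2) (add_left_injective 2)
            (fun _ _ => zero_le) ?_ ENNReal.summable ENNReal.summable
          intro k
          apply le_of_eq
          have h1 : Prod.mk (k+2+1) ⁻¹' Ev' = B (k+2) := hsec k
          rw [h1]
      _ = changePointMeasure ρ ν Ev' := hPEv'.symm
      _ ≤ changePointMeasure ρ ν {ω | τ α ω.2 < (ω.1:ℕ∞)} := measure_mono hEv'sub
      _ ≤ ENNReal.ofReal α := hFA α hαIoo
  -- identify the finite-dimensional marginals
  have hmap1 : ∀ k : ℕ, ν (k+1) (B (k+2)) = Measure.pi (fun i : Fin (k+2) =>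
      if (i:ℕ)+1 < k+1 then gaussianReal 0 v else gaussianReal A v) (S k) := by
    intro k
    rw [← hBpre k, ← Measure.map_apply (hproj (k+2)) (hSmeas k), hν.2 (k+1) (k+2)]
  have hmap0 : ∀ k : ℕ, ν (k+3) (B (k+2))
      = Measure.pi (fun _ : Fin (k+2) => gaussianReal 0 v) (S k) := by
    intro k
    rw [← hBpre k, ← Measure.map_apply (hproj (k+2)) (hSmeas k), hν.2 (k+3) (k+2)]
    have hfam : (fun i : Fin (k+2) =>
        if (i:ℕ)+1 < k+3 then gaussianReal 0 (⟨σ ^ 2, sq_nonneg σ⟩:ℝ≥0)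
        else gaussianReal A ⟨σ ^ 2, sq_nonneg σ⟩)
        = fun _ : Fin (k+2) => gaussianReal 0 v :=
      funext fun i => if_pos (Nat.succ_lt_succ i.isLt)
    rw [hfam]
  set M : ℝ≥0∞ := ENNReal.ofReal (Real.exp ((2*A*t - 2*A^2)/(2*(v:ℝ)))) with hMdef
  set Tail : ℝ≥0∞ := 2 * ENNReal.ofReal (Real.sqrt 2 * Real.exp (-(t/2-A)^2/(4*(v:ℝ))))
    with hTaildef
  have hperk : ∀ k, ν (k+1) (B (k+2)) ≤ M * ν (k+3) (B (k+2)) + Tail := by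
    intro k
    rw [hmap1 k, hmap0 k]
    exact perk_bound A hA v hv k (S k) (hSmeas k) t ht2A
  -- sum of the weights is 1
  have hsum1 : ∑' k : ℕ, ENNReal.ofReal ((1-ρ)^k * ρ) = 1 := by
    have heq : ∀ k : ℕ, ENNReal.ofReal ((1-ρ)^k * ρ)
        = (ENNReal.ofReal (1-ρ))^k * ENNReal.ofReal ρ := fun k => by
      rw [ENNReal.ofReal_mul (by positivity), ENNReal.ofReal_pow (le_of_lt h1ρ)]
    rw [tsum_congr heq, ENNReal.tsum_mul_right, ENNReal.tsum_geometric]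
    have h2 : (1:ℝ≥0∞) - ENNReal.ofReal (1-ρ) = ENNReal.ofReal ρ := by
      rw [← ENNReal.ofReal_one, ← ENNReal.ofReal_sub _ (le_of_lt h1ρ)]
      norm_num
    rw [h2]
    exact ENNReal.inv_mul_cancel (by simp [ENNReal.ofReal_pos, hρ0]) ENNReal.ofReal_ne_top
  -- reindex weights
  have hwfac : ∀ k : ℕ, ENNReal.ofReal ((1-ρ)^k * ρ)
      = ENNReal.ofReal ((1-ρ)⁻¹^2) * ENNReal.ofReal ((1-ρ)^(k+2) * ρ) := by
    intro k
    rw [← ENNReal.ofReal_mul (by positivity)]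
    congr 1
    have : (1-ρ)^(k+2) = (1-ρ)^k * (1-ρ)^2 := by ring
    rw [this]
    field_simp
  have hwsum : ∑' k, ENNReal.ofReal ((1-ρ)^k * ρ) * ν (k+3) (B (k+2))
      ≤ ENNReal.ofReal ((1-ρ)⁻¹^2) * ENNReal.ofReal α := by
    calc ∑' k, ENNReal.ofReal ((1-ρ)^k * ρ) * ν (k+3) (B (k+2))
        = ∑' k, ENNReal.ofReal ((1-ρ)⁻¹^2)
            * (ENNReal.ofReal ((1-ρ)^(k+2) * ρ) * ν (k+3) (B (k+2))) := by
          apply tsum_congr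
          intro k
          rw [hwfac k, mul_assoc]
      _ = ENNReal.ofReal ((1-ρ)⁻¹^2)
            * ∑' k, ENNReal.ofReal ((1-ρ)^(k+2) * ρ) * ν (k+3) (B (k+2)) :=
          ENNReal.tsum_mul_left
      _ ≤ ENNReal.ofReal ((1-ρ)⁻¹^2) * ENNReal.ofReal α := mul_le_mul_right hFAsum _
  -- main chain
  have hchain : changePointMeasure ρ ν Ev
      ≤ M * (ENNReal.ofReal ((1-ρ)⁻¹^2) * ENNReal.ofReal α) + Tail := by
    rw [hPEv]
    calc ∑' k, ENNReal.ofReal ((1-ρ)^k * ρ) * ν (k+1) (B (k+2))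
        ≤ ∑' k, ENNReal.ofReal ((1-ρ)^k * ρ) * (M * ν (k+3) (B (k+2)) + Tail) :=
          ENNReal.tsum_le_tsum fun k => mul_le_mul_right (hperk k) _
      _ = ∑' k, (M * (ENNReal.ofReal ((1-ρ)^k * ρ) * ν (k+3) (B (k+2)))
            + ENNReal.ofReal ((1-ρ)^k * ρ) * Tail) := by
          apply tsum_congr
          intro k
          ring
      _ = M * (∑' k, ENNReal.ofReal ((1-ρ)^k * ρ) * ν (k+3) (B (k+2)))
            + (∑' k, ENNReal.ofReal ((1-ρ)^k * ρ)) * Tail := by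
          rw [ENNReal.tsum_add, ENNReal.tsum_mul_left, ENNReal.tsum_mul_right]
      _ ≤ M * (ENNReal.ofReal ((1-ρ)⁻¹^2) * ENNReal.ofReal α) + 1 * Tail :=
          add_le_add (mul_le_mul_right hwsum _) (mul_le_mul_left (le_of_eq hsum1) _)
      _ = M * (ENNReal.ofReal ((1-ρ)⁻¹^2) * ENNReal.ofReal α) + Tail := by
          rw [one_mul]
  -- the real-number estimate
  have hexp1 : (2*A*t - 2*A^2)/(2*(v:ℝ)) = ε' * L / 2 := by
    rw [htdef]
    field_simp
    ring
  have htc : t/2 - A = c*L - A/2 := by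
    rw [htdef, hcdef]
    field_simp
    ring
  set Y : ℝ := Real.exp (-(1-ε')*L) with hYdef
  clear_value Y
  have hY : Y = α ^ (1-ε') := by
    have hlog : Real.log α = -L := by rw [hLdef]; ring
    rw [Real.rpow_def_of_pos hα0, hlog, hYdef]
    ring_nf
  have hterm1 : Real.exp (ε'*L/2) * ((1-ρ)⁻¹^2 * α) ≤ Y/2 := by
    have hXY : Real.exp (ε'*L/2) * Real.exp (ε'*L/2) * α = Y := by
      rw [hαexp, ← Real.exp_add, ← Real.exp_add, hYdef]
      congr 1
      ring
    have hlogle : Real.log (2*(1-ρ)⁻¹^2) ≤ ε'*L/2 := by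
      have hne : ε' ≠ 0 := ne_of_gt hε'pos
      have hh := mul_le_mul_of_nonneg_left hL1 (le_of_lt hε'pos)
      have heq : ε' * ((2/ε') * Real.log (2*(1-ρ)⁻¹^2))
          = 2 * Real.log (2*(1-ρ)⁻¹^2) := by
        field_simp
      rw [heq] at hh
      linarith
    have h2' : 2*(1-ρ)⁻¹^2 ≤ Real.exp (ε'*L/2) := by
      calc 2*(1-ρ)⁻¹^2 = Real.exp (Real.log (2*(1-ρ)⁻¹^2)) :=
            (Real.exp_log (by positivity)).symm
        _ ≤ Real.exp (ε'*L/2) := Real.exp_le_exp.2 hlogle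
    exact term1_aux _ _ _ _ (by positivity) (le_of_lt hα0) hXY h2' (Real.exp_nonneg _)
  have hterm2 : 2*(Real.sqrt 2 * Real.exp (-(t/2-A)^2/(4*(v:ℝ)))) ≤ Y/2 := by
    have hquad : 4*(v:ℝ)*(1-ε')*L + 4*(v:ℝ)*Real.log (4*Real.sqrt 2) ≤ (t/2-A)^2 := by
      rw [htc]
      exact hL₂ L hLq
    have hexp2 : -(t/2-A)^2/(4*(v:ℝ)) ≤ -(1-ε')*L - Real.log (4*Real.sqrt 2) := by
      rw [div_le_iff₀ (by positivity : (0:ℝ) < 4*(v:ℝ))]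
      nlinarith
    have hexp3 : Real.exp (-(t/2-A)^2/(4*(v:ℝ))) ≤ Y / (4*Real.sqrt 2) := by
      calc Real.exp (-(t/2-A)^2/(4*(v:ℝ)))
          ≤ Real.exp (-(1-ε')*L - Real.log (4*Real.sqrt 2)) := Real.exp_le_exp.2 hexp2
        _ = Y / (4*Real.sqrt 2) := by
            rw [Real.exp_sub, Real.exp_log (by positivity), hYdef]
    have hs2pos : (0:ℝ) < Real.sqrt 2 := by positivity
    calc 2*(Real.sqrt 2 * Real.exp (-(t/2-A)^2/(4*(v:ℝ))))
        ≤ 2*(Real.sqrt 2 * (Y / (4*Real.sqrt 2))) := by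
          apply mul_le_mul_of_nonneg_left _ (by norm_num)
          exact mul_le_mul_of_nonneg_left hexp3 (le_of_lt hs2pos)
      _ = Y/2 := by
          field_simp
          ring
  have hreal : Real.exp ((2*A*t - 2*A^2)/(2*(v:ℝ))) * ((1-ρ)⁻¹^2 * α)
      + 2*(Real.sqrt 2 * Real.exp (-(t/2-A)^2/(4*(v:ℝ)))) ≤ α ^ (1-ε) := by
    have hmono : α ^ ((1:ℝ)-ε') ≤ α ^ ((1:ℝ)-ε) :=
      Real.rpow_le_rpow_of_exponent_ge hα0 (le_of_lt hα1) (by linarith)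
    rw [hexp1]
    calc Real.exp (ε'*L/2) * ((1-ρ)⁻¹^2 * α)
          + 2*(Real.sqrt 2 * Real.exp (-(t/2-A)^2/(4*(v:ℝ))))
        ≤ Y/2 + Y/2 := add_le_add hterm1 hterm2
      _ = Y := by ring
      _ = α ^ ((1:ℝ)-ε') := hY
      _ ≤ α ^ ((1:ℝ)-ε) := hmono
  -- conclude
  have hcomb : M * (ENNReal.ofReal ((1-ρ)⁻¹^2) * ENNReal.ofReal α) + Tail
      ≤ ENNReal.ofReal (α ^ (1-ε)) := by
    rw [hMdef, hTaildef, ← ENNReal.ofReal_mul (by positivity),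
      ← ENNReal.ofReal_mul (Real.exp_nonneg _),
      show (2:ℝ≥0∞) = ENNReal.ofReal 2 by norm_num,
      ← ENNReal.ofReal_mul (by norm_num),
      ← ENNReal.ofReal_add (by positivity) (by positivity)]
    exact ENNReal.ofReal_le_ofReal hreal
  exact le_trans hchain hcomb

end
end
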